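/- (Lemma 8.4) For γ > 0 let m_γ = ψ⁽⁰⁾(γ) (digamma at γ) and σ_γ = √(ψ⁽¹⁾(γ)) (square root of trigamma at γ), and define f_γ(x) = (σ_γ / Γ(γ)) · exp( γ·(σ_γ·x + m_γ) − e^{σ_γ·x + m_γ} ) for x ∈ ℝ. Then f_γ converges uniformly over compact subsets of ℝ, as γ → ∞, to the standard normal density φ(x) = (2π)^{−1/2}·e^{−x²/2}; that is, for every R > 0, sup_{|x| ≤ R} |f_γ(x) − φ(x)| → 0 as γ → ∞. -/

import Mathlib

open MeasureTheory Real Set Filter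
open scoped ENNReal NNReal

noncomputable section

/-- The digamma function `ψ⁰(γ) = (log Γ)'(γ)`. -/
def digamma (γ : ℝ) : ℝ := deriv (fun x => Real.log (Real.Gamma x)) γ

/-- The trigamma function `ψ¹(γ) = (log Γ)''(γ)`. -/
def trigamma (γ : ℝ) : ℝ := deriv (deriv (fun x => Real.log (Real.Gamma x))) γ

/-- The density of the centered and normalized log-gamma variable `(ξ − m_γ)/σ_γ`,
where `ξ` has density `exp(γu − e^u)/Γ(γ)`, `m_γ = ψ⁰(γ)` and `σ_γ = √ψ¹(γ)`:
`f_γ(x) = (σ_γ/Γ(γ)) exp(γ(σ_γ x + m_γ) − e^{σ_γ x + m_γ})`. -/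
def logGammaDensity (γ : ℝ) (x : ℝ) : ℝ :=
  (Real.sqrt (trigamma γ) / Real.Gamma γ) *
    Real.exp (γ * (Real.sqrt (trigamma γ) * x + digamma γ) -
      Real.exp (Real.sqrt (trigamma γ) * x + digamma γ))

end

noncomputable section Aux

namespace Lemma84

open Finset Topology

/-- Partial "derivative" sums: derivative of `logGammaSeq · n`. -/
def S1 (n : ℕ) (x : ℝ) : ℝ := Real.log n - ∑ k ∈ Finset.range (n + 1), 1 / (x + k)

/-- Second derivative partial sums. -/
def S2 (n : ℕ) (x : ℝ) : ℝ := ∑ k ∈ Finset.range (n + 1), 1 / (x + k) ^ 2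

/-- The digamma function as a series. -/
def psi (x : ℝ) : ℝ :=
  -Real.eulerMascheroniConstant + ∑' k : ℕ, (1 / ((k : ℝ) + 1) - 1 / (x + k))

/-- The trigamma function as a series. -/
def tri (x : ℝ) : ℝ := ∑' k : ℕ, 1 / (x + (k : ℝ)) ^ 2

/-- The constant part of `S1`. -/
def c (n : ℕ) : ℝ := Real.log n - ∑ k ∈ Finset.range (n + 1), 1 / ((k : ℝ) + 1)

lemma aux_ineq {a : ℝ} (ha : 0 < a) (k : ℕ) : ((k : ℝ) + 1) ≤ (1 + 1 / a) * (a + k) := by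
  have h1 : (1 + 1/a) * (a + k) = a + k + ((k : ℝ)/a + 1) := by field_simp; ring
  have h2 : (0:ℝ) ≤ (k : ℝ)/a := by positivity
  rw [h1]; linarith

lemma one_div_add_le {a : ℝ} (ha : 0 < a) (k : ℕ) :
    1 / (a + k) ≤ (1 + 1 / a) / (k + 1) := by
  rw [div_le_div_iff₀ (by positivity) (by positivity)]
  have := aux_ineq ha k
  nlinarith

lemma summable_inv_sq : Summable (fun k : ℕ => 1 / ((k : ℝ) + 1) ^ 2) := by
  have := Real.summable_one_div_nat_pow.mpr (le_refl 2)
  have h := (summable_nat_add_iff (f := fun n : ℕ => 1 / (n : ℝ) ^ 2) 1).mpr this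
  simpa using h

lemma summable_tri {x : ℝ} (hx : 0 < x) : Summable (fun k : ℕ => 1 / (x + (k : ℝ)) ^ 2) := by
  apply Summable.of_nonneg_of_le (fun k => by positivity)
    (fun k => ?_) (summable_inv_sq.mul_left ((1 + 1/x) ^ 2))
  have h1 := one_div_add_le hx k
  have h2 : (0:ℝ) < x + k := by positivity
  calc 1 / (x + (k:ℝ)) ^ 2 = (1 / (x + k)) ^ 2 := by rw [div_pow, one_pow]
    _ ≤ ((1 + 1/x) / (k + 1)) ^ 2 := by
        apply pow_le_pow_left₀ (by positivity) h1
    _ = (1 + 1/x) ^ 2 * (1 / ((k:ℝ) + 1) ^ 2) := by rw [div_pow]; ring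
  
lemma summable_psi {x : ℝ} (hx : 0 < x) :
    Summable (fun k : ℕ => 1 / ((k : ℝ) + 1) - 1 / (x + k)) := by
  apply Summable.of_norm
  apply Summable.of_nonneg_of_le (fun k => norm_nonneg _)
    (fun k => ?_) (summable_inv_sq.mul_left ((|x - 1|) * (1 + 1/x)))
  have h2 : (0:ℝ) < x + k := by positivity
  have key : 1 / ((k : ℝ) + 1) - 1 / (x + k) = (x - 1) / (((k:ℝ) + 1) * (x + k)) := by
    field_simp; ring
  rw [Real.norm_eq_abs, key, abs_div, abs_of_pos (by positivity : (0:ℝ) < ((k:ℝ)+1) * (x+k))]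
  have hC : |x - 1| * (1 + 1/x) * (1 / ((k:ℝ) + 1) ^ 2)
      = (|x - 1| * (1 + 1/x)) / ((k:ℝ) + 1) ^ 2 := by ring
  rw [hC, div_le_div_iff₀ (by positivity) (by positivity)]
  have h3 := mul_le_mul_of_nonneg_left (aux_ineq hx k)
    (by positivity : (0:ℝ) ≤ |x - 1| * ((k:ℝ) + 1))
  nlinarith

lemma tendsto_c : Tendsto c atTop (𝓝 (-Real.eulerMascheroniConstant)) := by
  have hc : ∀ n : ℕ, c n = -(((harmonic (n+1) : ℚ) : ℝ) - Real.log ((n:ℝ)+1))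
      - (Real.log ((n:ℝ)+1) - Real.log n) := by
    intro n
    rw [c]
    push_cast [harmonic]
    ring_nf
  have h1 : Tendsto (fun n : ℕ => ((harmonic (n+1) : ℚ) : ℝ) - Real.log ((n:ℝ)+1)) atTop
      (𝓝 Real.eulerMascheroniConstant) := by
    have := (tendsto_add_atTop_iff_nat 1).mpr Real.tendsto_harmonic_sub_log
    apply this.congr
    intro n; push_cast; ring
  have h2 : Tendsto (fun n : ℕ => Real.log ((n:ℝ)+1) - Real.log n) atTop (𝓝 0) := by
    have hbase : Tendsto (fun n : ℕ => (1:ℝ) + 1/(n:ℝ)) atTop (𝓝 1) := by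
      simpa using (tendsto_const_nhds (x := (1:ℝ))).add tendsto_one_div_atTop_nhds_zero_nat
    have hlog := hbase.log one_ne_zero
    rw [Real.log_one] at hlog
    apply hlog.congr'
    filter_upwards [eventually_ge_atTop 1] with n hn
    have hn0 : (0:ℝ) < (n:ℝ) := by exact_mod_cast hn
    rw [show (1:ℝ) + 1/(n:ℝ) = ((n:ℝ)+1)/n by field_simp, Real.log_div (by positivity) hn0.ne']
  have := (h1.neg).sub h2
  rw [sub_zero] at this
  exact this.congr fun n => (hc n).symm

lemma shift_tuo {f : ℕ → ℝ → ℝ} {g : ℝ → ℝ} {K : Set ℝ}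
    (h : TendstoUniformlyOn f g atTop K) :
    TendstoUniformlyOn (fun n => f (n + 1)) g atTop K :=
  fun u hu => (tendsto_add_atTop_nat 1).eventually (h u hu)

lemma tlu_S2 : TendstoLocallyUniformlyOn S2 tri atTop (Ioi (0:ℝ)) := by
  rw [tendstoLocallyUniformlyOn_iff_forall_isCompact isOpen_Ioi]
  intro K hK hKc
  rcases K.eq_empty_or_nonempty with rfl | hne
  · exact tendstoUniformlyOn_empty
  set a := sInf K with ha_def
  have haK : a ∈ K := hKc.sInf_mem hne
  have ha : 0 < a := hK haK
  have hax : ∀ x ∈ K, a ≤ x := fun x hx => csInf_le hKc.bddBelow hx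
  have hu : Summable (fun k : ℕ => (1 + 1/a)^2 * (1 / ((k:ℝ)+1)^2)) :=
    summable_inv_sq.mul_left _
  have H := tendstoUniformlyOn_tsum_nat hu (f := fun (k : ℕ) (x : ℝ) => 1 / (x + k)^2)
    (s := K) ?_
  · exact shift_tuo H
  · intro k x hx
    have h1 : a ≤ x := hax x hx
    have hx0 : 0 < x := lt_of_lt_of_le ha h1
    have h2 : (0:ℝ) < x + k := by positivity
    rw [Real.norm_eq_abs, abs_of_nonneg (by positivity : (0:ℝ) ≤ 1/(x + (k:ℝ))^2)]
    calc 1 / (x + (k:ℝ))^2 = (1/(x+k))^2 := by rw [div_pow, one_pow]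
      _ ≤ ((1 + 1/a)/((k:ℝ)+1))^2 := by
          apply pow_le_pow_left₀ (by positivity)
          calc 1/(x+(k:ℝ)) ≤ 1/(a+k) := by
                apply one_div_le_one_div_of_le (by positivity) (by linarith)
            _ ≤ (1 + 1/a)/((k:ℝ)+1) := one_div_add_le ha k
      _ = (1 + 1/a)^2 * (1 / ((k:ℝ)+1)^2) := by rw [div_pow]; ring

lemma g_bound {a b x : ℝ} (ha : 0 < a) (hax : a ≤ x) (hxb : x ≤ b) (k : ℕ) :
    |1/((k:ℝ)+1) - 1/(x+k)| ≤ ((b+1)*(1+1/a)) * (1/((k:ℝ)+1)^2) := by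
  have hx : 0 < x := lt_of_lt_of_le ha hax
  have h2 : (0:ℝ) < x + k := by positivity
  have key : 1 / ((k : ℝ) + 1) - 1 / (x + k) = (x - 1) / (((k:ℝ) + 1) * (x + k)) := by
    field_simp; ring
  rw [key, abs_div, abs_of_pos (by positivity : (0:ℝ) < ((k:ℝ)+1) * (x+k))]
  have hC : ((b+1)*(1+1/a)) * (1 / ((k:ℝ) + 1) ^ 2)
      = ((b+1)*(1+1/a)) / ((k:ℝ) + 1) ^ 2 := by ring
  rw [hC, div_le_div_iff₀ (by positivity) (by positivity)]
  have h3 : ((k:ℝ)+1) ≤ (1+1/a)*(x+k) := by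
    refine (aux_ineq ha k).trans ?_
    have : (0:ℝ) < 1 + 1/a := by positivity
    nlinarith
  have hx1 : |x - 1| ≤ b + 1 := by
    rw [abs_le]; constructor <;> nlinarith [abs_nonneg (x-1)]
  have h4 := mul_le_mul hx1 (mul_le_mul_of_nonneg_left h3
    (by positivity : (0:ℝ) ≤ (k:ℝ)+1)) (by positivity) (by linarith [hx, hax, hxb] : (0:ℝ) ≤ b+1)
  nlinarith [h4]

lemma S1_eq (n : ℕ) (x : ℝ) :
    S1 n x = c n + ∑ k ∈ Finset.range (n+1), (1/((k:ℝ)+1) - 1/(x+k)) := by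
  rw [S1, c, Finset.sum_sub_distrib]
  ring

lemma tlu_S1 : TendstoLocallyUniformlyOn S1 psi atTop (Ioi (0:ℝ)) := by
  rw [tendstoLocallyUniformlyOn_iff_forall_isCompact isOpen_Ioi]
  intro K hK hKc
  rcases K.eq_empty_or_nonempty with rfl | hne
  · exact tendstoUniformlyOn_empty
  set a := sInf K
  set b := sSup K
  have haK : a ∈ K := hKc.sInf_mem hne
  have ha : 0 < a := hK haK
  have hax : ∀ x ∈ K, a ≤ x := fun x hx => csInf_le hKc.bddBelow hx
  have hxb : ∀ x ∈ K, x ≤ b := fun x hx => le_csSup hKc.bddAbove hx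
  have hconst : TendstoUniformlyOn (fun (n : ℕ) (_ : ℝ) => c n)
      (fun _ => -Real.eulerMascheroniConstant) atTop K := by
    rw [Metric.tendstoUniformlyOn_iff]
    intro ε hε
    filter_upwards [Metric.tendsto_nhds.mp tendsto_c ε hε] with n hn x _
    rwa [dist_comm] at hn
  have hu : Summable (fun k : ℕ => ((b+1)*(1+1/a)) * (1 / ((k:ℝ)+1)^2)) :=
    summable_inv_sq.mul_left _
  have H := tendstoUniformlyOn_tsum_nat hu
    (f := fun (k : ℕ) (x : ℝ) => 1/((k:ℝ)+1) - 1/(x+k)) (s := K) ?_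
  · have := hconst.add (shift_tuo H)
    apply this.congr
    filter_upwards with n x hx
    exact (S1_eq n x).symm
  · intro k x hx
    rw [Real.norm_eq_abs]
    exact g_bound ha (hax x hx) (hxb x hx) k

lemma hasDerivAt_logGammaSeq {x : ℝ} (hx : 0 < x) (n : ℕ) :
    HasDerivAt (fun y => Real.BohrMollerup.logGammaSeq y n) (S1 n x) x := by
  have hsum : HasDerivAt (fun y => ∑ m ∈ Finset.range (n+1), Real.log (y + m))
      (∑ m ∈ Finset.range (n+1), 1 / (x + m)) x := by
    apply HasDerivAt.fun_sum
    intro m _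
    have h0 : x + (m:ℝ) ≠ 0 := by positivity
    simpa using (((hasDerivAt_id x).add_const (m:ℝ)).log h0)
  have h1 : HasDerivAt (fun y : ℝ => y * Real.log n + Real.log (Nat.factorial n : ℝ))
      (Real.log n) x := (hasDerivAt_mul_const _).add_const _
  simpa [Real.BohrMollerup.logGammaSeq, S1] using h1.fun_sub hsum

lemma hasDerivAt_S1 {x : ℝ} (hx : 0 < x) (n : ℕ) :
    HasDerivAt (S1 n) (S2 n x) x := by
  have hsum : HasDerivAt (fun y : ℝ => ∑ k ∈ Finset.range (n+1), 1 / (y + (k:ℝ)))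
      (∑ k ∈ Finset.range (n+1), -(1 / (x + (k:ℝ))^2)) x := by
    apply HasDerivAt.fun_sum
    intro k _
    have h0 : x + (k:ℝ) ≠ 0 := by positivity
    have := (((hasDerivAt_id x).add_const (k:ℝ)).inv h0)
    simpa [one_div, neg_div, Pi.inv_def] using this
  have h1 : HasDerivAt (fun y : ℝ => Real.log n - ∑ k ∈ Finset.range (n+1), 1 / (y + (k:ℝ)))
      (0 - ∑ k ∈ Finset.range (n+1), -(1 / (x + (k:ℝ))^2)) x :=
    (hasDerivAt_const x _).sub hsum
  rw [zero_sub, ← Finset.sum_neg_distrib] at h1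
  simp only [neg_neg] at h1
  exact h1

lemma hasDerivAt_logGamma {x : ℝ} (hx : 0 < x) :
    HasDerivAt (fun y => Real.log (Real.Gamma y)) (psi x) x := by
  refine hasDerivAt_of_tendstoLocallyUniformlyOn isOpen_Ioi tlu_S1
    (Eventually.of_forall fun n y hy => hasDerivAt_logGammaSeq hy n)
    (fun y hy => Real.BohrMollerup.tendsto_log_gamma hy) hx

lemma hasDerivAt_psi {x : ℝ} (hx : 0 < x) : HasDerivAt psi (tri x) x := by
  refine hasDerivAt_of_tendstoLocallyUniformlyOn isOpen_Ioi tlu_S2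
    (Eventually.of_forall fun n y hy => hasDerivAt_S1 hy n)
    (fun y hy => tlu_S1.tendsto_at hy) hx

lemma digamma_eq {γ : ℝ} (hγ : 0 < γ) : digamma γ = psi γ :=
  (hasDerivAt_logGamma hγ).deriv

lemma trigamma_eq {γ : ℝ} (hγ : 0 < γ) : trigamma γ = tri γ := by
  have h1 : deriv (fun x => Real.log (Real.Gamma x)) =ᶠ[nhds γ] psi := by
    filter_upwards [isOpen_Ioi.mem_nhds hγ] with y hy
    exact (hasDerivAt_logGamma hy).deriv
  rw [trigamma, h1.deriv_eq]
  exact (hasDerivAt_psi hγ).deriv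

lemma tri_pos {x : ℝ} (hx : 0 < x) : 0 < tri x := by
  have h0 : (0:ℝ) < 1 / (x + (0 : ℕ)) ^ 2 := by positivity
  refine lt_of_lt_of_le h0 (Summable.le_tsum (summable_tri hx) 0 fun k _ => by positivity)

lemma tri_antitone {x y : ℝ} (hx : 0 < x) (hxy : x ≤ y) : tri y ≤ tri x := by
  refine Summable.tsum_le_tsum (fun k => ?_) (summable_tri (lt_of_lt_of_le hx hxy)) (summable_tri hx)
  have h2 : (0:ℝ) < x + k := by positivity
  refine one_div_le_one_div_of_le (by positivity) ?_
  apply pow_le_pow_left₀ (by positivity) (by linarith)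

lemma psi_strictMono : StrictMonoOn psi (Ioi (0:ℝ)) := by
  apply strictMonoOn_of_deriv_pos (convex_Ioi 0)
  · exact fun y hy => ((hasDerivAt_psi hy).continuousAt).continuousWithinAt
  · intro y hy
    rw [interior_Ioi] at hy
    rw [(hasDerivAt_psi hy).deriv]
    exact tri_pos hy

lemma logGamma_rec {x : ℝ} (hx : 0 < x) :
    Real.log (Real.Gamma (x + 1)) = Real.log (Real.Gamma x) + Real.log x := by
  rw [Real.Gamma_add_one hx.ne', Real.log_mul hx.ne' (Real.Gamma_pos_of_pos hx).ne', add_comm]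

lemma psi_rec {x : ℝ} (hx : 0 < x) : psi (x + 1) = psi x + 1 / x := by
  have h1 : HasDerivAt (fun y => Real.log (Real.Gamma (y + 1))) (psi (x + 1)) x := by
    have := (hasDerivAt_logGamma (show 0 < x + 1 by linarith)).comp x
      ((hasDerivAt_id x).add_const 1)
    simpa [Function.comp_def] using this
  have h2 : HasDerivAt (fun y => Real.log (Real.Gamma y) + Real.log y) (psi x + 1 / x) x := by
    simpa [one_div] using (hasDerivAt_logGamma hx).fun_add (Real.hasDerivAt_log hx.ne')
  have h3 : (fun y => Real.log (Real.Gamma (y + 1)))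
      =ᶠ[nhds x] (fun y => Real.log (Real.Gamma y) + Real.log y) := by
    filter_upwards [isOpen_Ioi.mem_nhds hx] with y hy
    exact logGamma_rec hy
  exact (h3.hasDerivAt_iff.mp h1).unique h2

lemma psi_le_log {γ : ℝ} (hγ : 0 < γ) : psi γ ≤ Real.log γ ∧ Real.log γ ≤ psi (γ + 1) := by
  obtain ⟨c, hc, hceq⟩ := exists_hasDerivAt_eq_slope (fun y => Real.log (Real.Gamma y)) psi
    (show γ < γ + 1 by linarith)
    (fun y hy => (hasDerivAt_logGamma (lt_of_lt_of_le hγ hy.1)).continuousAt.continuousWithinAt)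
    (fun y hy => hasDerivAt_logGamma (hγ.trans hy.1))
  rw [logGamma_rec hγ] at hceq
  have hceq' : psi c = Real.log γ := by rw [hceq]; field_simp; ring
  have hcpos : 0 < c := hγ.trans hc.1
  constructor
  · rw [← hceq']
    exact (psi_strictMono hγ hcpos hc.1).le
  · rw [← hceq']
    exact (psi_strictMono hcpos (by linarith : (0:ℝ) < γ + 1) hc.2).le

lemma mvt_tri {γ : ℝ} (hγ : 0 < γ) : ∃ c ∈ Ioo γ (γ + 1), tri c = 1 / γ := by
  obtain ⟨c, hc, hceq⟩ := exists_hasDerivAt_eq_slope psi tri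
    (show γ < γ + 1 by linarith)
    (fun y hy => (hasDerivAt_psi (lt_of_lt_of_le hγ hy.1)).continuousAt.continuousWithinAt)
    (fun y hy => hasDerivAt_psi (hγ.trans hy.1))
  refine ⟨c, hc, ?_⟩
  rw [hceq, psi_rec hγ]
  field_simp
  ring

lemma one_div_le_tri {γ : ℝ} (hγ : 0 < γ) : 1 / γ ≤ tri γ := by
  obtain ⟨c, hc, hceq⟩ := mvt_tri hγ
  rw [← hceq]
  exact tri_antitone hγ hc.1.le

lemma tri_le_one_div {γ : ℝ} (hγ : 1 < γ) : tri γ ≤ 1 / (γ - 1) := by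
  obtain ⟨c, hc, hceq⟩ := mvt_tri (show (0:ℝ) < γ - 1 by linarith)
  rw [← hceq]
  have : γ - 1 + 1 = γ := by ring
  rw [this] at hc
  have hc0 : (0:ℝ) < c := lt_trans (by linarith) hc.1
  exact tri_antitone hc0 hc.2.le

/-- Stirling-type quantity. -/
def Efun (x : ℝ) : ℝ := Real.log (Real.Gamma x) - (x - 1/2) * Real.log x + x

lemma tendsto_log_succ_sub : Tendsto (fun n : ℕ => Real.log ((n:ℝ)+1) - Real.log n) atTop (𝓝 0) := by
  have hbase : Tendsto (fun n : ℕ => (1:ℝ) + 1/(n:ℝ)) atTop (𝓝 1) := by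
    simpa using (tendsto_const_nhds (x := (1:ℝ))).add tendsto_one_div_atTop_nhds_zero_nat
  have hlog := hbase.log one_ne_zero
  rw [Real.log_one] at hlog
  apply hlog.congr'
  filter_upwards [eventually_ge_atTop 1] with n hn
  have hn0 : (0:ℝ) < (n:ℝ) := by exact_mod_cast hn
  rw [show (1:ℝ) + 1/(n:ℝ) = ((n:ℝ)+1)/n by field_simp, Real.log_div (by positivity) hn0.ne']

lemma hasDerivAt_Efun {x : ℝ} (hx : 0 < x) :
    HasDerivAt Efun (psi x - Real.log x + 1/(2*x)) x := by
  have h1 : HasDerivAt (fun y : ℝ => (y - 1/2) * Real.log y)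
      (1 * Real.log x + (x - 1/2) * x⁻¹) x :=
    ((hasDerivAt_id x).sub_const (1/2)).mul (Real.hasDerivAt_log hx.ne')
  have h2 := ((hasDerivAt_logGamma hx).sub h1).add (hasDerivAt_id x)
  have : psi x - (1 * Real.log x + (x - 1/2) * x⁻¹) + 1 = psi x - Real.log x + 1/(2*x) := by
    field_simp
    ring
  rw [this] at h2
  exact h2

lemma Ederiv_bound {x : ℝ} (hx : 0 < x) : |psi x - Real.log x + 1/(2*x)| ≤ 1/(2*x) := by
  have h1 : psi x ≤ Real.log x := (psi_le_log hx).1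
  have h2 : Real.log x ≤ psi x + 1/x := by
    have := (psi_le_log hx).2
    rwa [psi_rec hx] at this
  have h3 : 1/x = 2*(1/(2*x)) := by field_simp
  rw [abs_le]
  constructor <;> nlinarith [h3]

lemma Enat : Tendsto (fun n : ℕ => Efun n) atTop (𝓝 (Real.log (2 * Real.pi) / 2)) := by
  rw [← tendsto_add_atTop_iff_nat 1]
  have key : ∀ᶠ n : ℕ in atTop, Efun ((n:ℝ)+1)
      = (Real.log (Stirling.stirlingSeq n) + ((1/2)*Real.log 2 + 1))
        - ((n:ℝ)+1/2) * (Real.log ((n:ℝ)+1) - Real.log n) := by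
    filter_upwards [eventually_ge_atTop 1] with n hn
    have hn0 : (0:ℝ) < (n:ℝ) := by exact_mod_cast hn
    have hΓ : Real.Gamma ((n:ℝ)+1) = (Nat.factorial n : ℝ) := by
      exact_mod_cast Real.Gamma_nat_eq_factorial n
    have hst := Stirling.log_stirlingSeq_formula n
    have h2n : Real.log (2*(n:ℝ)) = Real.log 2 + Real.log n :=
      Real.log_mul two_ne_zero hn0.ne'
    have hne : Real.log ((n:ℝ)/Real.exp 1) = Real.log n - 1 := by
      rw [Real.log_div hn0.ne' (Real.exp_pos 1).ne', Real.log_exp]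
    rw [Efun, hΓ]
    rw [h2n, hne] at hst
    have hfact : Real.log (Nat.factorial n : ℝ)
        = Real.log (Stirling.stirlingSeq n) + 1/2*(Real.log 2 + Real.log n)
          + (n:ℝ)*(Real.log n - 1) := by rw [hst]; ring
    rw [hfact]
    ring
  have hst : Tendsto (fun n => Real.log (Stirling.stirlingSeq n)) atTop
      (𝓝 (Real.log π / 2)) := by
    have hπ : (0:ℝ) < √π := Real.sqrt_pos.mpr Real.pi_pos
    have := Stirling.tendsto_stirlingSeq_sqrt_pi.log hπ.ne'
    rwa [Real.log_sqrt Real.pi_pos.le] at this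
  have hb : Tendsto (fun n : ℕ => ((n:ℝ)+1/2) * (Real.log ((n:ℝ)+1) - Real.log n))
      atTop (𝓝 1) := by
    have hA : Tendsto (fun n : ℕ => (n:ℝ) * (Real.log ((n:ℝ)+1) - Real.log n))
        atTop (𝓝 1) := by
      have h1 := (Real.tendsto_one_add_div_pow_exp 1).log (Real.exp_pos 1).ne'
      rw [Real.log_exp] at h1
      apply h1.congr'
      filter_upwards [eventually_ge_atTop 1] with n hn
      have hn0 : (0:ℝ) < (n:ℝ) := by exact_mod_cast hn
      have hpos : (0:ℝ) < 1 + 1/(n:ℝ) := by positivity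
      rw [Real.log_pow]
      rw [show (1:ℝ) + 1/(n:ℝ) = ((n:ℝ)+1)/n by field_simp,
        Real.log_div (by positivity) hn0.ne']
    have hB := tendsto_log_succ_sub
    have := hA.add (hB.const_mul (1/2 : ℝ))
    rw [mul_zero, add_zero] at this
    apply this.congr
    intro n; ring
  have hT := (hst.add_const ((1/2)*Real.log 2 + 1)).sub hb
  have hval : Real.log π / 2 + ((1/2)*Real.log 2 + 1) - 1 = Real.log (2*π) / 2 := by
    rw [Real.log_mul two_ne_zero Real.pi_pos.ne']
    ring
  rw [hval] at hT
  exact (hT.congr' (key.mono fun n hn => hn.symm)).congr fun n =>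
    congrArg Efun (by push_cast; ring)

lemma Ediff_bound {n : ℕ} (hn : 1 ≤ n) {γ : ℝ} (h1 : (n:ℝ) ≤ γ) (h2 : γ ≤ (n:ℝ)+1) :
    |Efun γ - Efun n| ≤ 1/(2*(n:ℝ)) := by
  have hn0 : (0:ℝ) < (n:ℝ) := by exact_mod_cast hn
  have hcont : ContinuousOn (fun t => psi t - Real.log t + 1/(2*t)) (uIcc (n:ℝ) γ) := by
    intro t ht
    rw [uIcc_of_le h1] at ht
    have ht0 : 0 < t := lt_of_lt_of_le hn0 ht.1
    exact (((hasDerivAt_psi ht0).continuousAt.sub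
      (Real.continuousAt_log ht0.ne')).add
      (continuousAt_const.div (continuousAt_const.mul continuousAt_id) (mul_ne_zero two_ne_zero ht0.ne'))).continuousWithinAt
  have hft := intervalIntegral.integral_eq_sub_of_hasDerivAt
    (f := Efun) (f' := fun t => psi t - Real.log t + 1/(2*t)) (a := (n:ℝ)) (b := γ)
    (fun t ht => by
      rw [uIcc_of_le h1] at ht
      exact hasDerivAt_Efun (lt_of_lt_of_le hn0 ht.1))
    (hcont.intervalIntegrable)
  have hbound := intervalIntegral.norm_integral_le_of_norm_le_const
    (C := 1/(2*(n:ℝ))) (a := (n:ℝ)) (b := γ)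
    (f := fun t => psi t - Real.log t + 1/(2*t)) ?_
  · rw [hft] at hbound
    rw [Real.norm_eq_abs] at hbound
    refine hbound.trans ?_
    have : |γ - (n:ℝ)| ≤ 1 := by rw [abs_le]; constructor <;> linarith
    calc 1/(2*(n:ℝ)) * |γ - n| ≤ 1/(2*(n:ℝ)) * 1 := by
          apply mul_le_mul_of_nonneg_left this (by positivity)
      _ = 1/(2*(n:ℝ)) := mul_one _
  · intro t ht
    rw [uIoc_of_le h1] at ht
    have ht0 : 0 < t := lt_trans hn0 ht.1
    rw [Real.norm_eq_abs]
    refine (Ederiv_bound ht0).trans ?_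
    apply one_div_le_one_div_of_le (by positivity)
    have := ht.1
    nlinarith

lemma tendsto_Efun : Tendsto Efun atTop (𝓝 (Real.log (2 * Real.pi) / 2)) := by
  have h1 : Tendsto (fun γ : ℝ => Efun (⌊γ⌋₊ : ℝ)) atTop (𝓝 (Real.log (2*π)/2)) :=
    Enat.comp tendsto_nat_floor_atTop
  have h2 : Tendsto (fun γ : ℝ => Efun γ - Efun (⌊γ⌋₊ : ℝ)) atTop (𝓝 0) := by
    refine squeeze_zero_norm' (a := fun γ : ℝ => 1/(2*(⌊γ⌋₊:ℝ))) ?_ ?_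
    · filter_upwards [eventually_ge_atTop (1:ℝ)] with γ hγ
      simpa using Ediff_bound (Nat.le_floor (by exact_mod_cast hγ))
        (Nat.floor_le (by linarith)) (Nat.lt_floor_add_one γ).le
    · have : Tendsto (fun n : ℕ => 1/(2*(n:ℝ))) atTop (𝓝 0) := by
        have := tendsto_one_div_atTop_nhds_zero_nat.const_mul (1/2 : ℝ)
        rw [mul_zero] at this
        apply this.congr
        intro n; field_simp
      exact this.comp tendsto_nat_floor_atTop
  have := h1.add h2
  rw [add_zero] at this
  exact this.congr fun γ => by ring

/-- The `x`-independent part of `log f_γ − log φ`. -/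
def Afun (γ : ℝ) : ℝ := (1/2) * Real.log (tri γ) - Real.log (Real.Gamma γ)
  + γ * psi γ - Real.exp (psi γ) + Real.log (2*Real.pi)/2

/-- The `x`-dependent part of `log f_γ − log φ`. -/
def Bfun (γ x : ℝ) : ℝ := γ * (Real.sqrt (tri γ) * x)
  - Real.exp (psi γ) * (Real.exp (Real.sqrt (tri γ) * x) - 1) + x^2/2

lemma density_eq {γ : ℝ} (hγ : 0 < γ) (x : ℝ) :
    logGammaDensity γ x
      = (Real.exp (-x^2/2) / Real.sqrt (2*Real.pi)) * Real.exp (Afun γ + Bfun γ x) := by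
  have htri : 0 < tri γ := tri_pos hγ
  have hσ : 0 < Real.sqrt (tri γ) := Real.sqrt_pos.mpr htri
  have hΓ : 0 < Real.Gamma γ := Real.Gamma_pos_of_pos hγ
  have h2π : (0:ℝ) < Real.sqrt (2*Real.pi) := Real.sqrt_pos.mpr (by positivity)
  rw [logGammaDensity, digamma_eq hγ, trigamma_eq hγ,
    show Real.sqrt (tri γ) / Real.Gamma γ
      = Real.exp (Real.log (Real.sqrt (tri γ) / Real.Gamma γ)) from
      (Real.exp_log (by positivity)).symm,
    show Real.exp (-x^2/2) / Real.sqrt (2*Real.pi)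
      = Real.exp (-x^2/2 - Real.log (Real.sqrt (2*Real.pi))) by
      rw [Real.exp_sub, Real.exp_log h2π],
    ← Real.exp_add, ← Real.exp_add]
  congr 1
  rw [Real.log_div hσ.ne' hΓ.ne', Real.log_sqrt htri.le,
    Real.log_sqrt (by positivity : (0:ℝ) ≤ 2*Real.pi), Real.exp_add, Afun, Bfun]
  ring

lemma cube_bound {y : ℝ} (hy : |y| ≤ 1) : |Real.exp y - (1 + y + y^2/2)| ≤ |y|^3 := by
  have h := Real.exp_bound hy (by norm_num : 0 < 3)
  have hsum : ∑ m ∈ Finset.range 3, y^m / (Nat.factorial m) = 1 + y + y^2/2 := by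
    rw [Finset.sum_range_succ, Finset.sum_range_succ, Finset.sum_range_one]
    norm_num [Nat.factorial]
  rw [hsum] at h
  refine h.trans ?_
  have hc : (((3:ℕ).succ : ℝ) / ((Nat.factorial 3) * 3)) ≤ 1 := by
    norm_num [Nat.factorial]
  nlinarith [pow_nonneg (abs_nonneg y) 3]

lemma abs_exp_sub_one_le {y u : ℝ} (h : |y| ≤ u) : |Real.exp y - 1| ≤ Real.exp u - 1 := by
  rcases le_or_gt 0 y with hy | hy
  · rw [abs_of_nonneg (by nlinarith [Real.add_one_le_exp y] : (0:ℝ) ≤ Real.exp y - 1)]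
    have : y ≤ u := by rwa [abs_of_nonneg hy] at h
    have := Real.exp_le_exp.mpr this
    linarith
  · rw [abs_of_nonpos (by nlinarith [Real.exp_le_exp.mpr hy.le, Real.exp_zero] :
      Real.exp y - 1 ≤ 0)]
    have hyu : -y ≤ u := by rwa [abs_of_neg hy] at h
    have h1 : Real.exp (-y) ≤ Real.exp u := Real.exp_le_exp.mpr hyu
    have h2 : Real.exp (-y/2) * Real.exp (-y/2) = Real.exp (-y) := by
      rw [← Real.exp_add]; ring_nf
    have h3 : Real.exp (y/2) * Real.exp (y/2) = Real.exp y := by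
      rw [← Real.exp_add]; ring_nf
    have h4 : Real.exp (-y/2) * Real.exp (y/2) = 1 := by
      rw [← Real.exp_add, show -y/2 + y/2 = 0 by ring, Real.exp_zero]
    nlinarith [sq_nonneg (Real.exp (-y/2) - Real.exp (y/2))]

lemma exp_psi_bounds {γ : ℝ} (hγ : 1 ≤ γ) :
    γ - 1 ≤ Real.exp (psi γ) ∧ Real.exp (psi γ) ≤ γ := by
  have hγ0 : (0:ℝ) < γ := by linarith
  constructor
  · have h2 : Real.log γ - 1/γ ≤ psi γ := by
      have := (psi_le_log hγ0).2
      rw [psi_rec hγ0] at this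
      linarith
    have := Real.exp_le_exp.mpr h2
    rw [Real.exp_sub, Real.exp_log hγ0] at this
    have hexp : (-(1/γ)) + 1 ≤ Real.exp (-(1/γ)) := Real.add_one_le_exp _
    have h3 : γ * Real.exp (-(1/γ)) = γ / Real.exp (1/γ) := by
      rw [Real.exp_neg]; ring
    have h4 : γ * ((-(1/γ)) + 1) ≤ γ * Real.exp (-(1/γ)) :=
      mul_le_mul_of_nonneg_left hexp hγ0.le
    have h5 : γ * ((-(1/γ)) + 1) = γ - 1 := by field_simp; ring
    rw [h3] at h4
    linarith
  · have h1 := (psi_le_log hγ0).1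
    have := Real.exp_le_exp.mpr h1
    rwa [Real.exp_log hγ0] at this

lemma Afun_bound {γ : ℝ} (hγ : 2 ≤ γ) :
    |Afun γ| ≤ |Real.log (γ * tri γ)|/2 + |Efun γ - Real.log (2*Real.pi)/2| + 1/γ := by
  have hγ0 : (0:ℝ) < γ := by linarith
  have htri : 0 < tri γ := tri_pos hγ0
  set δ := psi γ - Real.log γ with hδdef
  have hA : Afun γ = (1/2) * Real.log (γ * tri γ) - (Efun γ - Real.log (2*Real.pi)/2)
      - γ*(Real.exp δ - 1 - δ) := by
    have h3 : Real.exp (psi γ) = γ * Real.exp δ := by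
      rw [show psi γ = Real.log γ + δ by rw [hδdef]; ring, Real.exp_add, Real.exp_log hγ0]
    rw [Afun,
      show Real.log (tri γ) = Real.log (γ * tri γ) - Real.log γ by
        rw [Real.log_mul hγ0.ne' htri.ne']; ring,
      show Real.log (Real.Gamma γ) = Efun γ + (γ - 1/2)*Real.log γ - γ by rw [Efun]; ring,
      h3, show psi γ = Real.log γ + δ by rw [hδdef]; ring]
    ring
  have hδ0 : δ ≤ 0 := by
    have := (psi_le_log hγ0).1; rw [hδdef]; linarith
  have hδ1 : -(1/γ) ≤ δ := by
    have := (psi_le_log hγ0).2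
    rw [psi_rec hγ0] at this
    rw [hδdef]; linarith
  have habs : |δ| ≤ 1/γ := abs_le.mpr ⟨hδ1, hδ0.trans (by positivity)⟩
  have h1γ : 1/γ ≤ 1 := by rw [div_le_one hγ0]; linarith
  have hexp : |Real.exp δ - 1 - δ| ≤ δ^2 := Real.abs_exp_sub_one_sub_id_le (habs.trans h1γ)
  have hterm : |γ*(Real.exp δ - 1 - δ)| ≤ 1/γ := by
    rw [abs_mul, abs_of_pos hγ0]
    have hδ2 : δ^2 ≤ (1/γ)^2 := by
      rw [← sq_abs]
      exact pow_le_pow_left₀ (abs_nonneg δ) habs 2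
    have hid : γ * (1/γ)^2 = 1/γ := by field_simp
    have hmm := mul_le_mul_of_nonneg_left (hexp.trans hδ2) hγ0.le
    linarith
  rw [hA]
  have htr := abs_add_three ((1/2) * Real.log (γ * tri γ))
    (-(Efun γ - Real.log (2*Real.pi)/2)) (-(γ*(Real.exp δ - 1 - δ)))
  rw [abs_neg, abs_neg] at htr
  have heq : (1/2) * Real.log (γ * tri γ) + -(Efun γ - Real.log (2*Real.pi)/2)
      + -(γ*(Real.exp δ - 1 - δ))
      = (1/2) * Real.log (γ * tri γ) - (Efun γ - Real.log (2*Real.pi)/2)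
      - γ*(Real.exp δ - 1 - δ) := by ring
  rw [heq] at htr
  have habs2 : |(1/2) * Real.log (γ * tri γ)| = |Real.log (γ * tri γ)|/2 := by
    rw [abs_mul, abs_of_pos (by norm_num : (0:ℝ) < 1/2)]
    ring
  rw [habs2] at htr
  linarith

lemma Bfun_bound {γ x R : ℝ} (hγ : 2 ≤ γ) (hx : |x| ≤ R)
    (hσR : Real.sqrt (1/(γ-1)) * R ≤ 1) :
    |Bfun γ x| ≤ Real.sqrt (1/(γ-1)) * R + (γ * (Real.sqrt (1/(γ-1)))^3) * R^3
      + R^2/(2*(γ-1)) := by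
  have hγ0 : (0:ℝ) < γ := by linarith
  have hγ1 : (1:ℝ) < γ := by linarith
  have hγm : (0:ℝ) < γ - 1 := by linarith
  have hR0 : 0 ≤ R := (abs_nonneg x).trans hx
  have htri : 0 < tri γ := tri_pos hγ0
  set w := Real.sqrt (1/(γ-1)) with hwdef
  set σ := Real.sqrt (tri γ) with hσdef
  set t := σ * x with htdef
  have hσ0 : 0 ≤ σ := Real.sqrt_nonneg _
  have hw0 : 0 ≤ w := Real.sqrt_nonneg _
  have hσw : σ ≤ w := Real.sqrt_le_sqrt (tri_le_one_div hγ1)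
  have ht : |t| ≤ w * R := by
    rw [htdef, abs_mul, abs_of_nonneg hσ0]
    exact mul_le_mul hσw hx (abs_nonneg x) hw0
  have ht1 : |t| ≤ 1 := ht.trans hσR
  set e := Real.exp (psi γ) with hedef
  have he := exp_psi_bounds (by linarith : (1:ℝ) ≤ γ)
  have he0 : 0 < e := Real.exp_pos _
  set r := Real.exp t - (1 + t + t^2/2) with hrdef
  have hr : |r| ≤ |t|^3 := cube_bound ht1
  have hB : Bfun γ x = (γ - e)*t - e*r + (1 - e * tri γ) * x^2/2 := by
    have hσ2 : σ^2 = tri γ := Real.sq_sqrt htri.le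
    have ht2 : t^2 = tri γ * x^2 := by rw [htdef, mul_pow, hσ2]
    have hexp_t : Real.exp t = 1 + t + t^2/2 + r := by rw [hrdef]; ring
    rw [Bfun, ← hσdef, ← htdef, ← hedef, hexp_t]
    linear_combination (-(e/2)) * ht2
  have h1 : |(γ - e)*t| ≤ w * R := by
    rw [abs_mul]
    have hγe : |γ - e| ≤ 1 := abs_le.mpr ⟨by linarith [he.2], by linarith [he.1]⟩
    calc |γ - e| * |t| ≤ 1 * (w*R) :=
          mul_le_mul hγe ht (abs_nonneg t) zero_le_one
      _ = w * R := one_mul _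
  have h2 : |e*r| ≤ (γ * w^3) * R^3 := by
    rw [abs_mul, abs_of_pos he0]
    have htw : |t|^3 ≤ (w*R)^3 := pow_le_pow_left₀ (abs_nonneg t) ht 3
    calc e * |r| ≤ γ * (w*R)^3 :=
          mul_le_mul he.2 (hr.trans htw) (abs_nonneg r) hγ0.le
      _ = (γ * w^3) * R^3 := by ring
  have h3 : |(1 - e * tri γ) * x^2/2| ≤ R^2/(2*(γ-1)) := by
    have elo : (γ-1) * (1/γ) ≤ e * tri γ :=
      mul_le_mul he.1 (one_div_le_tri hγ0) (by positivity) he0.le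
    have ehi : e * tri γ ≤ γ * (1/(γ-1)) :=
      mul_le_mul he.2 (tri_le_one_div hγ1) htri.le hγ0.le
    have id1 : (γ-1) * (1/γ) = 1 - 1/γ := by field_simp
    have id2 : γ * (1/(γ-1)) = 1 + 1/(γ-1) := by field_simp; ring
    have id3 : 1/γ ≤ 1/(γ-1) := one_div_le_one_div_of_le hγm (by linarith)
    have hetri : |1 - e * tri γ| ≤ 1/(γ-1) := by
      rw [abs_le]
      constructor
      · rw [id2] at ehi; linarith
      · rw [id1] at elo; linarith
    have hx2 : x^2 ≤ R^2 := by
      rw [← sq_abs]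
      exact pow_le_pow_left₀ (abs_nonneg x) hx 2
    have habseq : |(1 - e * tri γ) * x^2/2| = |1 - e * tri γ| * (x^2/2) := by
      rw [abs_div, abs_mul, abs_of_nonneg (sq_nonneg x)]
      rw [abs_of_pos (by norm_num : (0:ℝ) < 2)]
      ring
    rw [habseq]
    have hstep : |1 - e * tri γ| * (x^2/2) ≤ (1/(γ-1)) * (R^2/2) :=
      mul_le_mul hetri (by linarith) (by positivity) (by positivity)
    have hid : (1/(γ-1)) * (R^2/2) = R^2/(2*(γ-1)) := by
      rw [div_mul_div_comm, one_mul, mul_comm (γ-1) 2]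
    linarith
  rw [hB]
  have htr := abs_add_three ((γ - e)*t) (-(e*r)) ((1 - e * tri γ) * x^2/2)
  rw [abs_neg] at htr
  have heq : (γ - e)*t + -(e*r) + (1 - e * tri γ) * x^2/2
      = (γ - e)*t - e*r + (1 - e * tri γ) * x^2/2 := by ring
  rw [heq] at htr
  linarith

/-- The uniform error bound. -/
def ubound (R γ : ℝ) : ℝ := |Real.log (γ * tri γ)|/2 + |Efun γ - Real.log (2*Real.pi)/2| + 1/γ
  + (Real.sqrt (1/(γ-1)) * R + (γ * (Real.sqrt (1/(γ-1)))^3) * R^3 + R^2/(2*(γ-1)))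

lemma haux_inv : Tendsto (fun γ : ℝ => 1/(γ-1)) atTop (𝓝 0) := by
  have h := tendsto_inv_atTop_zero.comp
    (tendsto_atTop_add_const_right atTop (-1) (tendsto_id (α := ℝ)))
  refine h.congr fun γ => ?_
  simp [one_div, sub_eq_add_neg, Function.comp]

lemma hfrac : Tendsto (fun γ : ℝ => γ/(γ-1)) atTop (𝓝 1) := by
  have := (tendsto_const_nhds (x := (1:ℝ))).add haux_inv
  rw [add_zero] at this
  apply this.congr'
  filter_upwards [eventually_gt_atTop (1:ℝ)] with γ hγ
  have : γ - 1 ≠ 0 := by linarith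
  field_simp
  ring

lemma hw_tendsto : Tendsto (fun γ : ℝ => Real.sqrt (1/(γ-1))) atTop (𝓝 0) := by
  have := haux_inv.sqrt
  rwa [Real.sqrt_zero] at this

lemma tendsto_gamma_tri : Tendsto (fun γ : ℝ => γ * tri γ) atTop (𝓝 1) := by
  apply tendsto_of_tendsto_of_tendsto_of_le_of_le' tendsto_const_nhds hfrac
  · filter_upwards [eventually_gt_atTop (1:ℝ)] with γ hγ
    have hγ0 : (0:ℝ) < γ := by linarith
    have := one_div_le_tri hγ0
    calc (1:ℝ) = γ * (1/γ) := by field_simp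
      _ ≤ γ * tri γ := mul_le_mul_of_nonneg_left this hγ0.le

  · filter_upwards [eventually_gt_atTop (1:ℝ)] with γ hγ
    have hγ0 : (0:ℝ) < γ := by linarith
    have := tri_le_one_div hγ
    calc γ * tri γ ≤ γ * (1/(γ-1)) := mul_le_mul_of_nonneg_left this hγ0.le
      _ = γ/(γ-1) := by ring

lemma ubound_tendsto (R : ℝ) : Tendsto (fun γ => ubound R γ) atTop (𝓝 0) := by
  have t1 : Tendsto (fun γ : ℝ => |Real.log (γ * tri γ)|/2) atTop (𝓝 0) := by
    have hl := ((Real.continuousAt_log one_ne_zero).tendsto.comp tendsto_gamma_tri)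
    rw [Real.log_one] at hl
    have := (hl.abs).div_const 2
    simpa using this
  have t2 : Tendsto (fun γ : ℝ => |Efun γ - Real.log (2*Real.pi)/2|) atTop (𝓝 0) := by
    have := (tendsto_Efun.sub_const (Real.log (2*Real.pi)/2)).abs
    simpa using this
  have t3 : Tendsto (fun γ : ℝ => 1/γ) atTop (𝓝 0) := by
    simpa [one_div] using tendsto_inv_atTop_zero
  have t4 : Tendsto (fun γ : ℝ => Real.sqrt (1/(γ-1)) * R) atTop (𝓝 0) := by
    simpa using hw_tendsto.mul_const R
  have t5 : Tendsto (fun γ : ℝ => (γ * (Real.sqrt (1/(γ-1)))^3) * R^3) atTop (𝓝 0) := by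
    have hm : Tendsto (fun γ : ℝ => (γ/(γ-1)) * Real.sqrt (1/(γ-1))) atTop (𝓝 0) := by
      have := hfrac.mul hw_tendsto
      rwa [mul_zero] at this
    have hc := hm.mul_const (R^3)
    rw [zero_mul] at hc
    apply hc.congr'
    filter_upwards [eventually_gt_atTop (1:ℝ)] with γ hγ
    have hinv : (0:ℝ) ≤ 1/(γ-1) := one_div_nonneg.mpr (by linarith)
    have hcube : (Real.sqrt (1/(γ-1)))^3 = (1/(γ-1)) * Real.sqrt (1/(γ-1)) := by
      rw [pow_succ, Real.sq_sqrt hinv]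
    rw [hcube]
    field_simp
  have t6 : Tendsto (fun γ : ℝ => R^2/(2*(γ-1))) atTop (𝓝 0) := by
    have := haux_inv.const_mul (R^2/2)
    rw [mul_zero] at this
    apply this.congr
    intro γ
    rw [div_mul_div_comm, mul_one]
  have hsum := (((t1.add t2).add t3).add ((t4.add t5).add t6)
    : Tendsto (fun γ : ℝ => |Real.log (γ * tri γ)|/2 + |Efun γ - Real.log (2*Real.pi)/2| + 1/γ
      + (Real.sqrt (1/(γ-1)) * R + (γ * (Real.sqrt (1/(γ-1)))^3) * R^3 + R^2/(2*(γ-1))))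
      atTop (𝓝 (0 + 0 + 0 + (0 + 0 + 0))))
  simp only [add_zero] at hsum
  exact hsum

end Lemma84

end Aux

/-- **Lemma 8.4.** The standardized log-gamma density `f_γ` converges uniformly over compact
sets, as `γ → ∞`, to the standard normal density `φ(x) = (2π)^{−1/2} e^{−x²/2}`. -/
theorem lemma_8_4 (R : ℝ) (hR : 0 < R) :
    TendstoUniformlyOn (fun (γ : ℝ) (x : ℝ) => logGammaDensity γ x)
      (fun x : ℝ => Real.exp (-x ^ 2 / 2) / Real.sqrt (2 * Real.pi))
      Filter.atTop (Set.Icc (-R) R) := by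
  rw [Metric.tendstoUniformlyOn_iff]
  intro ε hε
  have hexpu : Tendsto (fun γ => Real.exp (Lemma84.ubound R γ) - 1) atTop (nhds 0) := by
    have h0 := (Real.continuous_exp.tendsto 0).comp (Lemma84.ubound_tendsto R)
    rw [Real.exp_zero] at h0
    have := h0.sub_const 1
    rwa [sub_self] at this
  have E1 : ∀ᶠ γ : ℝ in atTop, (2:ℝ) ≤ γ := eventually_ge_atTop 2
  have E2 : ∀ᶠ γ : ℝ in atTop, Real.sqrt (1/(γ-1)) * R ≤ 1 := by
    have := Lemma84.hw_tendsto.mul_const R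
    rw [zero_mul] at this
    exact this.eventually (eventually_le_nhds one_pos)
  have E3 : ∀ᶠ γ : ℝ in atTop, Real.exp (Lemma84.ubound R γ) - 1 < ε :=
    hexpu.eventually (eventually_lt_nhds hε)
  filter_upwards [E1, E2, E3] with γ hγ2 hσR hlt x hxmem
  have hγ0 : (0:ℝ) < γ := by linarith
  have hx : |x| ≤ R := abs_le.mpr ⟨by linarith [hxmem.1], hxmem.2⟩
  have hA := Lemma84.Afun_bound hγ2
  have hB := Lemma84.Bfun_bound hγ2 hx hσR
  have hd : |Lemma84.Afun γ + Lemma84.Bfun γ x| ≤ Lemma84.ubound R γ := by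
    refine (abs_add_le _ _).trans ?_
    rw [Lemma84.ubound]
    linarith
  have heq := Lemma84.density_eq hγ0 x
  set φ := Real.exp (-x^2/2) / Real.sqrt (2*Real.pi) with hφdef
  have hsq : (1:ℝ) ≤ Real.sqrt (2*Real.pi) := by
    rw [show (1:ℝ) = Real.sqrt 1 by rw [Real.sqrt_one]]
    apply Real.sqrt_le_sqrt
    nlinarith [Real.pi_gt_three]
  have hφ0 : 0 < φ := by
    rw [hφdef]
    have : (0:ℝ) < Real.sqrt (2*Real.pi) := by linarith
    positivity
  have hφ1 : φ ≤ 1 := by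
    rw [hφdef, div_le_one (by linarith)]
    refine le_trans ?_ hsq
    rw [show (1:ℝ) = Real.exp 0 by rw [Real.exp_zero]]
    apply Real.exp_le_exp.mpr
    nlinarith [sq_nonneg x]
  rw [Real.dist_eq, abs_sub_comm]
  have hfactor : logGammaDensity γ x - φ
      = φ * (Real.exp (Lemma84.Afun γ + Lemma84.Bfun γ x) - 1) := by
    rw [heq, hφdef]; ring
  rw [hfactor, abs_mul, abs_of_pos hφ0]
  calc φ * |Real.exp (Lemma84.Afun γ + Lemma84.Bfun γ x) - 1|
      ≤ 1 * (Real.exp (Lemma84.ubound R γ) - 1) := by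
        apply mul_le_mul hφ1 (Lemma84.abs_exp_sub_one_le hd) (abs_nonneg _) zero_le_one
    _ = Real.exp (Lemma84.ubound R γ) - 1 := one_mul _
    _ < ε := hlt
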